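/- Suppose ℓ ≥ 2, 0 ≤ k < d, and there exists K_0 ∈ K_k([0,1]^d) whose ℓ-fold sumset ℓK_0 is nowhere dense in ℝ^d. Then the set of K ∈ K_k([0,1]^d) for which ℓK is nowhere dense is comeager in the complete metric space K_k([0,1]^d) with the Hausdorff metric. -/

import Mathlib

open Set Module TopologicalSpace

/-- The unit cube `[0,1]^d`. -/
def unitCube (d : ℕ) : Set (EuclideanSpace ℝ (Fin d)) :=
  {x | ∀ i, x i ∈ Set.Icc (0 : ℝ) 1}

/-- The unit cube as a (metric) space. -/
abbrev Cube (d : ℕ) := {x : EuclideanSpace ℝ (Fin d) // x ∈ unitCube d}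

/-- The `ℓ`-fold sumset `ℓK = {k₁ + ⋯ + k_ℓ : kᵢ ∈ K}`. -/
def msum {E : Type*} [AddCommMonoid E] (ℓ : ℕ) (K : Set E) : Set E :=
  {x | ∃ f : Fin ℓ → E, (∀ i, f i ∈ K) ∧ ∑ i, f i = x}

/-- A nonempty compact `K ⊆ [0,1]^d` intersects every `k`-dimensional affine
subspace meeting `[0,1]^d`. -/
def HitsAll (d k : ℕ) (K : NonemptyCompacts (Cube d)) : Prop :=
  ∀ V : AffineSubspace ℝ (EuclideanSpace ℝ (Fin d)), V ≠ ⊥ →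
    finrank ℝ V.direction = k →
    ((V : Set (EuclideanSpace ℝ (Fin d))) ∩ unitCube d).Nonempty →
    ∃ p ∈ (K : Set (Cube d)), (p : EuclideanSpace ℝ (Fin d)) ∈ V

/-- The set of a nonempty compact subset of the cube, viewed in `ℝ^d`. -/
def realize (d : ℕ) (K : NonemptyCompacts (Cube d)) : Set (EuclideanSpace ℝ (Fin d)) :=
  Subtype.val '' (K : Set (Cube d))

/-! ### Auxiliary lemmas -/

section NWD

variable {X Y : Type*} [TopologicalSpace X] [TopologicalSpace Y]

lemma IsNowhereDense.mono' {s t : Set X} (ht : IsNowhereDense t) (hst : s ⊆ t) :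
    IsNowhereDense s := by
  have : interior (closure s) ⊆ interior (closure t) :=
    interior_mono (closure_mono hst)
  rw [IsNowhereDense] at ht ⊢
  rw [ht] at this
  exact eq_empty_of_subset_empty this

lemma IsNowhereDense.union' {s t : Set X} (hs : IsNowhereDense s) (ht : IsNowhereDense t) :
    IsNowhereDense (s ∪ t) := by
  have hcs : IsClosed (closure s ∪ closure t) :=
    isClosed_closure.union isClosed_closure
  have h1 : IsOpen (closure s ∪ closure t)ᶜ ∧ Dense (closure s ∪ closure t)ᶜ := by
    rw [compl_union]
    have h2 : IsOpen (closure s)ᶜ ∧ Dense (closure s)ᶜ :=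
      isClosed_isNowhereDense_iff_compl.mp ⟨isClosed_closure, hs.closure⟩
    have h3 : IsOpen (closure t)ᶜ ∧ Dense (closure t)ᶜ :=
      isClosed_isNowhereDense_iff_compl.mp ⟨isClosed_closure, ht.closure⟩
    exact ⟨h2.1.inter h3.1, h2.2.inter_of_isOpen_left h3.2 h2.1⟩
  have := (isClosed_isNowhereDense_iff_compl.mpr ⟨h1.1, h1.2⟩).2
  exact this.mono' (union_subset_union subset_closure subset_closure)

lemma isNowhereDense_biUnion_finset {ι : Type*} {t : Finset ι} {s : ι → Set X}
    (h : ∀ i ∈ t, IsNowhereDense (s i)) : IsNowhereDense (⋃ i ∈ t, s i) := by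
  classical
  induction t using Finset.induction_on with
  | empty => simp
  | insert _ _ hx ih =>
    rw [Finset.set_biUnion_insert]
    exact (h _ (Finset.mem_insert_self _ _)).union'
      (ih fun i hi => h i (Finset.mem_insert_of_mem hi))

lemma isNowhereDense_iUnion_fintype {ι : Type*} [Fintype ι] {s : ι → Set X}
    (h : ∀ i, IsNowhereDense (s i)) : IsNowhereDense (⋃ i, s i) := by
  have : (⋃ i, s i) = ⋃ i ∈ (Finset.univ : Finset ι), s i := by simp
  rw [this]
  exact isNowhereDense_biUnion_finset fun i _ => h i

lemma IsNowhereDense.image_homeomorph {s : Set X} (h : IsNowhereDense s) (e : X ≃ₜ Y) :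
    IsNowhereDense (e '' s) := by
  rw [IsNowhereDense, ← e.image_closure, ← e.image_interior, h, image_empty]

end NWD

section Msum

variable {E : Type*} [AddCommMonoid E] [TopologicalSpace E] [ContinuousAdd E]

lemma msum_eq_image (ℓ : ℕ) (K : Set E) :
    msum ℓ K = (fun f : Fin ℓ → E => ∑ i, f i) '' (Set.univ.pi fun _ => K) := by
  ext x
  constructor
  · rintro ⟨f, hf, rfl⟩; exact ⟨f, fun i _ => hf i, rfl⟩
  · rintro ⟨f, hf, rfl⟩; exact ⟨f, fun i => hf i trivial, rfl⟩

lemma IsCompact.msum {ℓ : ℕ} {K : Set E} (hK : IsCompact K) : IsCompact (msum ℓ K) := by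
  rw [msum_eq_image]
  exact (isCompact_univ_pi fun _ => hK).image
    (continuous_finset_sum _ fun i _ => continuous_apply i)

lemma msum_nonempty {ℓ : ℕ} {K : Set E} (hK : K.Nonempty) : (msum ℓ K).Nonempty := by
  obtain ⟨p, hp⟩ := hK
  exact ⟨∑ _i : Fin ℓ, p, fun _ => p, fun _ => hp, rfl⟩

end Msum

lemma realize_compact (d : ℕ) (K : NonemptyCompacts (Cube d)) : IsCompact (realize d K) :=
  K.isCompact.image continuous_subtype_val

lemma realize_nonempty (d : ℕ) (K : NonemptyCompacts (Cube d)) : (realize d K).Nonempty :=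
  K.nonempty.image _

/-! ### Openness of the basic sets -/

lemma dist_sum_sum_aux {E : Type*} [SeminormedAddCommGroup E] {n : ℕ} (f g : Fin n → E)
    {c : ℝ} (h : ∀ i, dist (f i) (g i) ≤ c) :
    dist (∑ i, f i) (∑ i, g i) ≤ n * c := by
  rw [dist_eq_norm, ← Finset.sum_sub_distrib]
  calc ‖∑ i, (f i - g i)‖ ≤ ∑ i : Fin n, ‖f i - g i‖ := norm_sum_le _ _
    _ ≤ ∑ _i : Fin n, c := Finset.sum_le_sum fun i _ => by
        rw [← dist_eq_norm]; exact h i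
    _ = n * c := by simp [Finset.sum_const, mul_comm]

lemma isOpen_avoid (d ℓ : ℕ) (q : EuclideanSpace ℝ (Fin d)) (r : ℝ) :
    IsOpen {K : NonemptyCompacts (Cube d) | ¬ Metric.ball q r ⊆ msum ℓ (realize d K)} := by
  rw [Metric.isOpen_iff]
  intro K hK
  rw [mem_setOf_eq, not_subset] at hK
  obtain ⟨x, hxball, hxnot⟩ := hK
  have hclosed : IsClosed (msum ℓ (realize d K)) := (realize_compact d K).msum.isClosed
  have hne : (msum ℓ (realize d K)).Nonempty := msum_nonempty (realize_nonempty d K)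
  have hδ : 0 < Metric.infDist x (msum ℓ (realize d K)) :=
    (hclosed.notMem_iff_infDist_pos hne).mp hxnot
  set δ := Metric.infDist x (msum ℓ (realize d K)) with hδdef
  set ε := δ / (ℓ + 1) with hεdef
  have hε : 0 < ε := by positivity
  refine ⟨ε, hε, fun K' hK' => ?_⟩
  rw [Metric.mem_ball] at hK'
  rw [mem_setOf_eq, not_subset]
  refine ⟨x, hxball, fun hxmem => ?_⟩
  obtain ⟨f, hf, hsum⟩ := hxmem
  -- lift each f i back into K'
  have hfc : ∀ i, ∃ u : Cube d, u ∈ (K' : Set (Cube d)) ∧ (u : EuclideanSpace ℝ (Fin d)) = f i := by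
    intro i
    obtain ⟨u, hu, hval⟩ := hf i
    exact ⟨u, hu, hval⟩
  choose u hu huval using hfc
  have hedist : EMetric.hausdorffEdist (K' : Set (Cube d)) (K : Set (Cube d)) ≠ ⊤ :=
    Metric.hausdorffEdist_ne_top_of_nonempty_of_bounded K'.nonempty K.nonempty
      K'.isCompact.isBounded K.isCompact.isBounded
  have hhd : Metric.hausdorffDist (K' : Set (Cube d)) (K : Set (Cube d)) < ε := hK'
  have hg : ∀ i, ∃ v ∈ (K : Set (Cube d)), dist (u i) v < ε := fun i =>
    Metric.exists_dist_lt_of_hausdorffDist_lt (hu i) hhd hedist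
  choose v hv hvd using hg
  have hvsum : (∑ i, ((v i : EuclideanSpace ℝ (Fin d)))) ∈ msum ℓ (realize d K) :=
    ⟨fun i => v i, fun i => ⟨v i, hv i, rfl⟩, rfl⟩
  have hdistsum : dist x (∑ i, ((v i : EuclideanSpace ℝ (Fin d)))) ≤ ℓ * ε := by
    rw [← hsum]
    refine dist_sum_sum_aux _ _ fun i => ?_
    rw [← huval i]
    exact le_of_lt (by rw [← Subtype.dist_eq]; exact hvd i)
  have h1 : δ ≤ ℓ * ε := le_trans (Metric.infDist_le_dist_of_mem hvsum) hdistsum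
  have h2 : (ℓ : ℝ) * ε < δ := by
    have hℓ1 : (ℓ : ℝ) < (ℓ : ℝ) + 1 := by linarith
    have hlt : (ℓ : ℝ) * ε < ((ℓ : ℝ) + 1) * ε := mul_lt_mul_of_pos_right hℓ1 hε
    have heq : ((ℓ : ℝ) + 1) * ε = δ := by rw [hεdef]; field_simp
    linarith
  linarith

/-! ### The grid construction -/

section Grid

variable (d N : ℕ)

/-- The lattice point `z` as a vector in `ℝ^d`. -/
noncomputable def zvec (z : Fin d → Fin N) : EuclideanSpace ℝ (Fin d) :=
  (WithLp.equiv 2 (Fin d → ℝ)).symm fun i => (z i : ℝ)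

@[simp] lemma zvec_apply (z : Fin d → Fin N) (i : Fin d) : zvec d N z i = (z i : ℝ) := rfl

/-- The affine contraction `x ↦ (z + x)/N`. -/
noncomputable def phiMap (z : Fin d → Fin N) (x : EuclideanSpace ℝ (Fin d)) :
    EuclideanSpace ℝ (Fin d) :=
  ((N : ℝ))⁻¹ • (zvec d N z + x)

lemma phiMap_apply (z : Fin d → Fin N) (x : EuclideanSpace ℝ (Fin d)) (i : Fin d) :
    phiMap d N z x i = ((z i : ℝ) + x i) / N := by
  simp [phiMap, PiLp.smul_apply, PiLp.add_apply, div_eq_inv_mul, mul_add]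

/-- The small subcube indexed by `z`. -/
def smallCube (z : Fin d → Fin N) : Set (EuclideanSpace ℝ (Fin d)) :=
  {x | ∀ i, x i ∈ Set.Icc ((z i : ℝ) / N) (((z i : ℝ) + 1) / N)}

lemma smallCube_subset_unitCube (hN : 0 < N) (z : Fin d → Fin N) :
    smallCube d N z ⊆ unitCube d := by
  intro x hx i
  obtain ⟨h1, h2⟩ := hx i
  constructor
  · exact le_trans (by positivity) h1
  · refine le_trans h2 ?_
    rw [div_le_one (by exact_mod_cast hN)]
    have hzi : ((z i : ℕ) : ℝ) + 1 ≤ (N : ℝ) := by exact_mod_cast (z i).isLt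
    linarith

lemma phiMap_mem_smallCube (hN : 0 < N) (z : Fin d → Fin N) {x : EuclideanSpace ℝ (Fin d)}
    (hx : x ∈ unitCube d) : phiMap d N z x ∈ smallCube d N z := by
  intro i
  rw [phiMap_apply]
  obtain ⟨h1, h2⟩ := hx i
  have hNpos : (0 : ℝ) < N := by exact_mod_cast hN
  constructor
  · exact div_le_div_of_nonneg_right (by linarith) hNpos.le
  · exact div_le_div_of_nonneg_right (by linarith) hNpos.le

lemma exists_smallCube_mem (hN : 0 < N) {p : EuclideanSpace ℝ (Fin d)} (hp : p ∈ unitCube d) :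
    ∃ z : Fin d → Fin N, p ∈ smallCube d N z := by
  have hNpos : (0 : ℝ) < N := by exact_mod_cast hN
  refine ⟨fun i => ⟨min ⌊(N : ℝ) * p i⌋₊ (N - 1), ?_⟩, fun i => ?_⟩
  · have : min ⌊(N : ℝ) * p i⌋₊ (N - 1) ≤ N - 1 := min_le_right _ _
    omega
  · obtain ⟨h0, h1⟩ := hp i
    have hfl : (⌊(N : ℝ) * p i⌋₊ : ℝ) ≤ (N : ℝ) * p i := Nat.floor_le (by positivity)
    constructor
    · -- lower bound
      rw [div_le_iff₀ hNpos]
      have : ((min ⌊(N : ℝ) * p i⌋₊ (N - 1) : ℕ) : ℝ) ≤ (⌊(N : ℝ) * p i⌋₊ : ℝ) := by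
        exact_mod_cast min_le_left _ _
      calc ((min ⌊(N : ℝ) * p i⌋₊ (N - 1) : ℕ) : ℝ) ≤ (N : ℝ) * p i := le_trans this hfl
        _ = p i * N := mul_comm _ _
    · -- upper bound
      rw [le_div_iff₀ hNpos]
      show p i * N ≤ ((min ⌊(N : ℝ) * p i⌋₊ (N - 1) : ℕ) : ℝ) + 1
      rcases le_or_gt ⌊(N : ℝ) * p i⌋₊ (N - 1) with h | h
      · rw [min_eq_left h]
        calc p i * N = (N : ℝ) * p i := mul_comm _ _
          _ ≤ (⌊(N : ℝ) * p i⌋₊ : ℝ) + 1 := le_of_lt (Nat.lt_floor_add_one _)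
      · rw [min_eq_right h.le]
        have hcast : ((N - 1 : ℕ) : ℝ) + 1 = (N : ℝ) := by
          have : (1 : ℕ) ≤ N := hN
          push_cast [Nat.cast_sub this]
          ring
        rw [hcast]
        calc p i * N ≤ 1 * N := by nlinarith
          _ = N := one_mul _

lemma dist_le_of_mem_smallCube (hN : 0 < N) (z : Fin d → Fin N)
    {x y : EuclideanSpace ℝ (Fin d)} (hx : x ∈ smallCube d N z) (hy : y ∈ smallCube d N z) :
    dist x y ≤ Real.sqrt d / N := by
  have hNpos : (0 : ℝ) < N := by exact_mod_cast hN
  rw [EuclideanSpace.dist_eq]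
  have hbound : ∀ i, dist (x i) (y i) ^ 2 ≤ (1 / N) ^ 2 := by
    intro i
    have h1 := hx i
    have h2 := hy i
    have : |x i - y i| ≤ 1 / N := by
      rw [abs_le]
      constructor
      · have : ((z i : ℝ) + 1) / N - (z i : ℝ) / N = 1 / N := by field_simp; ring
        nlinarith [h1.1, h1.2, h2.1, h2.2]
      · have : ((z i : ℝ) + 1) / N - (z i : ℝ) / N = 1 / N := by field_simp; ring
        nlinarith [h1.1, h1.2, h2.1, h2.2]
    rw [Real.dist_eq]
    have habs : (0:ℝ) ≤ |x i - y i| := abs_nonneg _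
    nlinarith
  calc Real.sqrt (∑ i, dist (x i) (y i) ^ 2) ≤ Real.sqrt (∑ _i : Fin d, (1 / N) ^ 2) := by
        apply Real.sqrt_le_sqrt
        exact Finset.sum_le_sum fun i _ => hbound i
    _ = Real.sqrt (d * (1 / N) ^ 2) := by rw [Finset.sum_const]; simp [nsmul_eq_mul]
    _ = Real.sqrt d * (1 / N) := by
        rw [Real.sqrt_mul (Nat.cast_nonneg d), Real.sqrt_sq (by positivity)]
    _ = Real.sqrt d / N := by ring

end Grid

/-! ### Density -/

lemma dense_nwd (d k ℓ : ℕ) (hd : 2 ≤ d) (hk : k < d)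
    (K₀ : NonemptyCompacts (Cube d)) (h₀hits : HitsAll d k K₀)
    (h₀nwd : IsNowhereDense (msum ℓ (realize d K₀))) :
    Dense {K : {K : NonemptyCompacts (Cube d) // HitsAll d k K} |
      IsNowhereDense (msum ℓ (realize d (K : NonemptyCompacts (Cube d))))} := by
  rw [Metric.dense_iff]
  rintro ⟨K, hK⟩ r hr
  -- choose N with √d / N < r
  obtain ⟨N, hNgt⟩ := exists_nat_gt (max 1 (Real.sqrt d / r))
  have hN : 0 < N := by
    by_contra h
    push_neg at h
    interval_cases N
    simp at hNgt
    linarith [hNgt.1]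
  have hNpos : (0 : ℝ) < N := by exact_mod_cast hN
  have hsmall : Real.sqrt d / N < r := by
    have h1 : Real.sqrt d / r < N := lt_of_le_of_lt (le_max_right _ _) hNgt
    rw [div_lt_iff₀ hNpos]
    rw [div_lt_iff₀ hr] at h1
    linarith [mul_comm (r) (N:ℝ)]
  -- the set of relevant lattice points
  set Zset : Set (Fin d → Fin N) := {z | (smallCube d N z ∩ realize d K).Nonempty} with hZdef
  -- the contracted copies of K₀, inside the cube
  have hphi_mem : ∀ (z : Fin d → Fin N) (q : Cube d),
      phiMap d N z (q : EuclideanSpace ℝ (Fin d)) ∈ unitCube d := fun z q =>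
    smallCube_subset_unitCube d N hN z (phiMap_mem_smallCube d N hN z q.2)
  set g : (Fin d → Fin N) → Cube d → Cube d :=
    fun z q => ⟨phiMap d N z (q : EuclideanSpace ℝ (Fin d)), hphi_mem z q⟩ with hgdef
  have hgcont : ∀ z, Continuous (g z) := by
    intro z
    apply Continuous.subtype_mk
    exact (continuous_const_smul _).comp (continuous_const.add continuous_subtype_val)
  set C : Set (Cube d) := ⋃ z ∈ Zset, g z '' (K₀ : Set (Cube d)) with hCdef
  have hCcompact : IsCompact C := by
    apply Set.Finite.isCompact_biUnion (Set.toFinite Zset)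
    exact fun z _ => K₀.isCompact.image (hgcont z)
  -- Zset is nonempty
  obtain ⟨p₀, hp₀⟩ := K.nonempty
  obtain ⟨z₀, hz₀⟩ := exists_smallCube_mem d N hN p₀.2
  have hz₀Z : z₀ ∈ Zset := ⟨(p₀ : EuclideanSpace ℝ (Fin d)), hz₀, ⟨p₀, hp₀, rfl⟩⟩
  obtain ⟨q₀, hq₀⟩ := K₀.nonempty
  have hCne : C.Nonempty := ⟨g z₀ q₀, mem_biUnion hz₀Z ⟨q₀, hq₀, rfl⟩⟩
  set K' : NonemptyCompacts (Cube d) := ⟨⟨C, hCcompact⟩, hCne⟩ with hK'def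
  have hK'coe : (K' : Set (Cube d)) = C := rfl
  -- realize of K'
  have hrealize : realize d K' = ⋃ z ∈ Zset, phiMap d N z '' (realize d K₀) := by
    rw [realize, hK'coe, hCdef]
    rw [image_iUnion₂]
    refine iUnion₂_congr fun z hz => ?_
    rw [realize, image_image, image_image]
  -- distance bound
  have hdistKK' : dist K K' ≤ Real.sqrt d / N := by
    rw [Metric.NonemptyCompacts.dist_eq]
    apply Metric.hausdorffDist_le_of_mem_dist (by positivity)
    · intro p hp
      obtain ⟨z, hz⟩ := exists_smallCube_mem d N hN p.2
      have hzZ : z ∈ Zset := ⟨(p : EuclideanSpace ℝ (Fin d)), hz, ⟨p, hp, rfl⟩⟩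
      refine ⟨g z q₀, mem_biUnion hzZ ⟨q₀, hq₀, rfl⟩, ?_⟩
      rw [Subtype.dist_eq]
      exact dist_le_of_mem_smallCube d N hN z hz (phiMap_mem_smallCube d N hN z q₀.2)
    · intro y hy
      rw [hK'coe, hCdef, mem_iUnion₂] at hy
      obtain ⟨z, hzZ, q, hq, rfl⟩ := hy
      obtain ⟨pv, hpv, ⟨p, hp, rfl⟩⟩ := hzZ
      refine ⟨p, hp, ?_⟩
      rw [Subtype.dist_eq]
      exact dist_le_of_mem_smallCube d N hN z (phiMap_mem_smallCube d N hN z q.2) hpv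
  -- K' hits all k-planes
  have hK'hits : HitsAll d k K' := by
    intro V hVbot hVrank hVcube
    obtain ⟨pv, hpvV, hpvcube⟩ := hVcube
    obtain ⟨p, hpK, hpV⟩ := hK V hVbot hVrank ⟨pv, hpvV, hpvcube⟩
    obtain ⟨z, hz⟩ := exists_smallCube_mem d N hN p.2
    have hzZ : z ∈ Zset := ⟨(p : EuclideanSpace ℝ (Fin d)), hz, ⟨p, hpK, rfl⟩⟩
    -- the affine equivalence x ↦ (z + x)/N
    set e : EuclideanSpace ℝ (Fin d) ≃ᵃ[ℝ] EuclideanSpace ℝ (Fin d) :=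
      (AffineEquiv.constVAdd ℝ (EuclideanSpace ℝ (Fin d)) (zvec d N z)).trans
        (LinearEquiv.smulOfNeZero ℝ (EuclideanSpace ℝ (Fin d)) ((N : ℝ))⁻¹
          (by positivity)).toAffineEquiv with hedef
    have he : ∀ x, e x = phiMap d N z x := fun x => rfl
    set W : AffineSubspace ℝ (EuclideanSpace ℝ (Fin d)) :=
      V.comap (e : EuclideanSpace ℝ (Fin d) →ᵃ[ℝ] EuclideanSpace ℝ (Fin d)) with hWdef
    -- the preimage point
    set y₀ : EuclideanSpace ℝ (Fin d) :=
      (WithLp.equiv 2 (Fin d → ℝ)).symm (fun i => (N : ℝ) * (p : EuclideanSpace ℝ (Fin d)) i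
        - (z i : ℝ)) with hy₀def
    have hy₀i : ∀ i, y₀ i = (N : ℝ) * (p : EuclideanSpace ℝ (Fin d)) i - (z i : ℝ) :=
      fun i => rfl
    have hey₀ : e y₀ = (p : EuclideanSpace ℝ (Fin d)) := by
      rw [he]
      apply PiLp.ext
      intro i
      rw [phiMap_apply, hy₀i]
      field_simp
      ring
    have hy₀W : y₀ ∈ W := by
      rw [hWdef, AffineSubspace.mem_comap]
      simpa [hey₀] using hpV
    have hy₀cube : y₀ ∈ unitCube d := by
      intro i
      rw [hy₀i]
      obtain ⟨h1, h2⟩ := hz i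
      have := (div_le_iff₀ hNpos).mp h1
      have := (le_div_iff₀ hNpos).mp h2
      constructor <;> nlinarith
    have hWbot : W ≠ ⊥ := by
      rw [← AffineSubspace.nonempty_iff_ne_bot]
      exact ⟨y₀, hy₀W⟩
    have hWrank : finrank ℝ W.direction = k := by
      rw [hWdef, ← AffineSubspace.map_symm, AffineSubspace.map_direction]
      rw [← hVrank]
      exact LinearEquiv.finrank_map_eq e.symm.linear V.direction
    obtain ⟨q, hqK₀, hqW⟩ := h₀hits W hWbot hWrank ⟨y₀, hy₀W, hy₀cube⟩
    refine ⟨g z q, mem_biUnion hzZ ⟨q, hqK₀, rfl⟩, ?_⟩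
    have : (g z q : EuclideanSpace ℝ (Fin d)) = e (q : EuclideanSpace ℝ (Fin d)) := by
      rw [he]
    rw [this]
    rw [hWdef, AffineSubspace.mem_comap] at hqW
    exact hqW
  -- msum of K' is nowhere dense
  have hK'nwd : IsNowhereDense (msum ℓ (realize d K')) := by
    -- homeomorphism for a tuple of lattice points
    have hhomeo : ∀ w : EuclideanSpace ℝ (Fin d),
        ∃ h : EuclideanSpace ℝ (Fin d) ≃ₜ EuclideanSpace ℝ (Fin d),
          ∀ x, h x = ((N : ℝ))⁻¹ • (w + x) := by
      intro w
      refine ⟨(Homeomorph.addLeft w).trans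
        (Homeomorph.smulOfNeZero ((N : ℝ))⁻¹ (by positivity)), fun x => rfl⟩
    choose hom hhom using hhomeo
    have hsubset : msum ℓ (realize d K') ⊆
        ⋃ ζ : Fin ℓ → (Fin d → Fin N), hom (∑ i, zvec d N (ζ i)) '' (msum ℓ (realize d K₀)) := by
      rintro x ⟨f, hf, rfl⟩
      have : ∀ i, ∃ (z : Fin d → Fin N) (q : EuclideanSpace ℝ (Fin d)),
          q ∈ realize d K₀ ∧ f i = phiMap d N z q := by
        intro i
        have := hf i
        rw [hrealize, mem_iUnion₂] at this
        obtain ⟨z, hz, q, hq, hfi⟩ := this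
        exact ⟨z, q, hq, hfi.symm⟩
      choose ζ q hq hfi using this
      rw [mem_iUnion]
      refine ⟨ζ, ∑ i, q i, ⟨q, hq, rfl⟩, ?_⟩
      rw [hhom]
      have : ∀ i, f i = ((N : ℝ))⁻¹ • (zvec d N (ζ i) + q i) := hfi
      calc ((N : ℝ))⁻¹ • (∑ i, zvec d N (ζ i) + ∑ i, q i)
          = ((N : ℝ))⁻¹ • (∑ i, (zvec d N (ζ i) + q i)) := by
            rw [Finset.sum_add_distrib]
        _ = ∑ i, ((N : ℝ))⁻¹ • (zvec d N (ζ i) + q i) := by rw [Finset.smul_sum]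
        _ = ∑ i, f i := by exact Finset.sum_congr rfl fun i _ => (hfi i).symm
    refine IsNowhereDense.mono' ?_ hsubset
    apply isNowhereDense_iUnion_fintype
    intro ζ
    exact h₀nwd.image_homeomorph _
  refine ⟨⟨K', hK'hits⟩, ?_, hK'nwd⟩
  rw [Metric.mem_ball, Subtype.dist_eq]
  calc dist K' K = dist K K' := dist_comm _ _
    _ ≤ Real.sqrt d / N := hdistKK'
    _ < r := hsmall

/-! ### Main theorem -/

/-- If some `K₀ ∈ 𝒦_k([0,1]^d)` has `ℓK₀` nowhere dense, then the generic element
`K` of `𝒦_k([0,1]^d)` (with the Hausdorff metric) has `ℓK` nowhere dense. -/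
theorem generic_msum_nwd (d k ℓ : ℕ) (hd : 2 ≤ d) (hk : k < d) (hℓ : 2 ≤ ℓ)
    (h0 : ∃ K₀ : NonemptyCompacts (Cube d), HitsAll d k K₀ ∧
      IsNowhereDense (msum ℓ (realize d K₀))) :
    {K : {K : NonemptyCompacts (Cube d) // HitsAll d k K} |
        IsNowhereDense (msum ℓ (realize d (K : NonemptyCompacts (Cube d))))} ∈
      residual {K : NonemptyCompacts (Cube d) // HitsAll d k K} := by
  obtain ⟨K₀, h₀hits, h₀nwd⟩ := h0
  set X := {K : NonemptyCompacts (Cube d) // HitsAll d k K} with hXdef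
  obtain ⟨D, hDcount, hDdense⟩ :=
    TopologicalSpace.exists_countable_dense (EuclideanSpace ℝ (Fin d))
  haveI : Countable ↥D := hDcount.to_subtype
  set G : Set X := {K : X |
      IsNowhereDense (msum ℓ (realize d (K : NonemptyCompacts (Cube d))))} with hGdef
  set U : ↥D × ℕ → Set X := fun p =>
    {K : X | ¬ Metric.ball (p.1 : EuclideanSpace ℝ (Fin d)) (1 / (p.2 + 1 : ℝ)) ⊆
      msum ℓ (realize d (K : NonemptyCompacts (Cube d)))} with hUdef
  have hGdense : Dense G := dense_nwd d k ℓ hd hk K₀ h₀hits h₀nwd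
  have hGsub : ∀ p, G ⊆ U p := by
    rintro ⟨q, n⟩ K hKG
    rw [hUdef, mem_setOf_eq]
    intro hball
    have hrpos : (0 : ℝ) < 1 / (n + 1 : ℝ) := by positivity
    have hballne : (Metric.ball (q : EuclideanSpace ℝ (Fin d)) (1 / (n + 1 : ℝ))).Nonempty :=
      Metric.nonempty_ball.2 hrpos
    have hsub2 : Metric.ball (q : EuclideanSpace ℝ (Fin d)) (1 / (n + 1 : ℝ)) ⊆
        interior (closure (msum ℓ (realize d (K : NonemptyCompacts (Cube d))))) :=
      interior_maximal (hball.trans subset_closure) Metric.isOpen_ball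
    rw [hGdef, mem_setOf_eq, IsNowhereDense] at hKG
    rw [hKG] at hsub2
    exact hballne.ne_empty (eq_empty_of_subset_empty hsub2)
  have hUopen : ∀ p, IsOpen (U p) := by
    rintro ⟨q, n⟩
    exact (isOpen_avoid d ℓ (q : EuclideanSpace ℝ (Fin d)) (1 / (n + 1 : ℝ))).preimage
      continuous_subtype_val
  have hUdense : ∀ p, Dense (U p) := fun p => hGdense.mono (hGsub p)
  have hUres : (⋂ p, U p) ∈ residual X :=
    countable_iInter_mem.mpr fun p => residual_of_dense_open (hUopen p) (hUdense p)
  refine Filter.mem_of_superset hUres ?_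
  intro K hK
  rw [mem_iInter] at hK
  rw [mem_setOf_eq]
  have hclosed : IsClosed (msum ℓ (realize d (K : NonemptyCompacts (Cube d)))) :=
    (realize_compact d _).msum.isClosed
  rw [hclosed.isNowhereDense_iff]
  by_contra hne
  obtain ⟨x, hx⟩ := nonempty_iff_ne_empty.mpr hne
  rw [mem_interior_iff_mem_nhds, Metric.mem_nhds_iff] at hx
  obtain ⟨ε, hε, hball⟩ := hx
  obtain ⟨q, hqD, hqx⟩ := hDdense.exists_dist_lt x (half_pos hε)
  obtain ⟨n, hn⟩ := exists_nat_one_div_lt (half_pos hε)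
  have hsub : Metric.ball (q : EuclideanSpace ℝ (Fin d)) (1 / (n + 1 : ℝ)) ⊆
      Metric.ball x ε := by
    intro y hy
    rw [Metric.mem_ball] at hy ⊢
    calc dist y x ≤ dist y q + dist q x := dist_triangle _ _ _
      _ < 1 / (n + 1 : ℝ) + ε / 2 := by
          rw [dist_comm q x]
          exact add_lt_add hy hqx
      _ < ε / 2 + ε / 2 := by linarith
      _ = ε := by ring
  exact hK (⟨⟨q, hqD⟩, n⟩ : ↥D × ℕ) (hsub.trans hball)
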